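/- For every integer k ≥ 1, the coefficient c_k = w_k (log 2 - Σ_{ℓ=1}^{2k} (-1)^{ℓ-1}/ℓ) satisfies 0 < c_k < 1/(π² k²). -/

import Mathlib

open Real intervalIntegral Finset

-- w_k as a real number
lemma ww_eq_inv_W (k : ℕ) :
    ((Nat.factorial (2 * k) : ℝ))^2 / (2 ^ (4 * k) * (Nat.factorial k : ℝ)^4)
      = 1 / ((2 * k + 1) * Real.Wallis.W k) := by
  rw [Real.Wallis.W_eq_factorial_ratio]
  have h1 : ((Nat.factorial (2 * k) : ℝ)) ≠ 0 := by positivity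
  have h2 : ((Nat.factorial k : ℝ)) ≠ 0 := by positivity
  have h3 : (2 * (k:ℝ) + 1) ≠ 0 := by positivity
  field_simp

lemma ww_lt (k : ℕ) (hk : 1 ≤ k) :
    ((Nat.factorial (2 * k) : ℝ))^2 / (2 ^ (4 * k) * (Nat.factorial k : ℝ)^4)
      < 1 / (π * k) := by
  have hkR : (1:ℝ) ≤ (k:ℝ) := by exact_mod_cast hk
  have hW := Real.Wallis.le_W k
  have hWpos := Real.Wallis.W_pos k
  rw [ww_eq_inv_W]
  have hkey : π * k < (2 * k + 1) * Real.Wallis.W k := by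
    have h1 : π * k < (2 * (k:ℝ) + 1) * ((2 * k + 1) / (2 * k + 2) * (π / 2)) := by
      rw [← sub_pos]
      have heq : (2 * (k:ℝ) + 1) * ((2 * k + 1) / (2 * k + 2) * (π / 2)) - π * k
          = π / (2 * (2 * (k:ℝ) + 2)) := by
        field_simp
        ring
      rw [heq]
      positivity
    calc π * k < (2 * (k:ℝ) + 1) * ((2 * k + 1) / (2 * k + 2) * (π / 2)) := h1
      _ ≤ (2 * k + 1) * Real.Wallis.W k := by
          apply mul_le_mul_of_nonneg_left hW (by positivity)
  exact one_div_lt_one_div_of_lt (by positivity) hkey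

lemma tail_repr (k : ℕ) :
    Real.log 2 - ∑ l ∈ Finset.range (2 * k), (-1 : ℝ) ^ l / (l + 1)
      = ∫ x in (0:ℝ)..1, x ^ (2 * k) / (1 + x) := by
  have hcont1 : ContinuousOn (fun x : ℝ => (1 + x)⁻¹) (Set.uIcc (0:ℝ) 1) := by
    apply ContinuousOn.inv₀ (by fun_prop)
    intro x hx
    rw [Set.uIcc_of_le (by norm_num)] at hx
    have : (0:ℝ) ≤ x := hx.1
    positivity
  have hint1 : IntervalIntegrable (fun x : ℝ => (1 + x)⁻¹) MeasureTheory.volume 0 1 :=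
    hcont1.intervalIntegrable
  have hint2 : IntervalIntegrable (fun x : ℝ => ∑ l ∈ Finset.range (2 * k), (-x) ^ l)
      MeasureTheory.volume 0 1 := by
    apply Continuous.intervalIntegrable
    fun_prop
  have hlog : ∫ x in (0:ℝ)..1, (1 + x)⁻¹ = Real.log 2 := by
    rw [intervalIntegral.integral_comp_add_left (fun x => x⁻¹) 1]
    norm_num
  have hS : ∑ l ∈ Finset.range (2 * k), (-1 : ℝ) ^ l / (l + 1)
      = ∫ x in (0:ℝ)..1, ∑ l ∈ Finset.range (2 * k), (-x) ^ l := by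
    rw [intervalIntegral.integral_finset_sum (fun l _ => by
      apply Continuous.intervalIntegrable; fun_prop)]
    refine Finset.sum_congr rfl fun l _ => ?_
    have h : (fun x : ℝ => (-x) ^ l) = fun x : ℝ => (-1:ℝ)^l * x ^ l := by
      funext x; rw [neg_pow]
    rw [h, intervalIntegral.integral_const_mul, integral_pow]
    norm_num [mul_one_div, div_eq_mul_inv]
  rw [← hlog, hS, ← intervalIntegral.integral_sub hint1 hint2]
  apply intervalIntegral.integral_congr
  intro x hx
  rw [Set.uIcc_of_le (by norm_num)] at hx
  have hx0 : (0:ℝ) ≤ x := hx.1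
  have hne : (1:ℝ) + x ≠ 0 := by positivity
  have hx1 : -x ≠ 1 := by
    intro h; linarith
  have hgeom : ∑ l ∈ Finset.range (2 * k), (-x) ^ l = ((-x) ^ (2 * k) - 1) / (-x - 1) :=
    geom_sum_eq hx1 _
  have hev : (-x) ^ (2 * k) = x ^ (2 * k) := by
    rw [neg_pow, pow_mul, neg_one_sq, one_pow, one_mul]
  have hne2 : -x - 1 ≠ 0 := by intro h; linarith [neg_nonpos_of_nonneg hx0]
  simp only [hgeom, hev]
  field_simp
  ring

lemma tail_pos (k : ℕ) : 0 < ∫ x in (0:ℝ)..1, x ^ (2 * k) / (1 + x) := by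
  apply intervalIntegral.intervalIntegral_pos_of_pos_on
  · apply ContinuousOn.intervalIntegrable
    apply ContinuousOn.div (by fun_prop) (by fun_prop)
    intro x hx
    rw [Set.uIcc_of_le (by norm_num)] at hx
    have : (0:ℝ) ≤ x := hx.1
    positivity
  · intro x hx
    have h0 : 0 < x := hx.1
    positivity
  · norm_num

lemma tail_ub (k : ℕ) (hk : 1 ≤ k) :
    (∫ x in (0:ℝ)..1, x ^ (2 * k) / (1 + x)) ≤ 1 / (4 * k) := by
  have hkR : (1:ℝ) ≤ (k:ℝ) := by exact_mod_cast hk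
  have hle : (∫ x in (0:ℝ)..1, x ^ (2 * k) / (1 + x))
      ≤ ∫ x in (0:ℝ)..1, (x ^ (2 * k) - x ^ (2 * k + 1) / 2) := by
    apply intervalIntegral.integral_mono_on (by norm_num)
    · apply ContinuousOn.intervalIntegrable
      apply ContinuousOn.div (by fun_prop) (by fun_prop)
      intro x hx
      rw [Set.uIcc_of_le (by norm_num)] at hx
      have : (0:ℝ) ≤ x := hx.1
      positivity
    · apply Continuous.intervalIntegrable; fun_prop
    · intro x hx
      have hx0 : (0:ℝ) ≤ x := hx.1
      have hx1 : x ≤ 1 := hx.2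
      have hpos : (0:ℝ) < 1 + x := by positivity
      rw [div_le_iff₀ hpos]
      have hps : x ^ (2 * k + 1) = x ^ (2 * k) * x := pow_succ x (2 * k)
      nlinarith [mul_nonneg (mul_nonneg (pow_nonneg hx0 (2 * k)) hx0) (sub_nonneg.2 hx1)]
  have hcomp : (∫ x in (0:ℝ)..1, (x ^ (2 * k) - x ^ (2 * k + 1) / 2))
      = 1 / (2 * (k:ℝ) + 1) - 1 / (2 * (2 * (k:ℝ) + 2)) := by
    rw [intervalIntegral.integral_sub (by apply Continuous.intervalIntegrable; fun_prop)
      (by apply Continuous.intervalIntegrable; fun_prop)]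
    have h1 : (∫ x in (0:ℝ)..1, x ^ (2 * k)) = 1 / (2 * (k:ℝ) + 1) := by
      rw [integral_pow]; push_cast; norm_num
    have h2 : (∫ x in (0:ℝ)..1, x ^ (2 * k + 1) / 2) = 1 / (2 * (2 * (k:ℝ) + 2)) := by
      simp_rw [div_eq_mul_inv]
      rw [intervalIntegral.integral_mul_const, integral_pow]
      push_cast; field_simp; ring
    rw [h1, h2]
  have harith : 1 / (2 * (k:ℝ) + 1) - 1 / (2 * (2 * (k:ℝ) + 2)) ≤ 1 / (4 * k) := by
    have h1 : (0:ℝ) < 2 * (k:ℝ) + 1 := by linarith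
    have h2 : (0:ℝ) < 2 * (2 * (k:ℝ) + 2) := by linarith
    have h3 : (0:ℝ) < 4 * (k:ℝ) := by linarith
    rw [div_sub_div _ _ (ne_of_gt h1) (ne_of_gt h2), div_le_div_iff₀ (by positivity) h3]
    nlinarith
  rw [hcomp] at hle
  linarith

theorem ck_bounds (k : ℕ) (hk : 1 ≤ k) :
    0 < ((Nat.factorial (2 * k) : ℝ))^2 / (2 ^ (4 * k) * (Nat.factorial k : ℝ)^4) *
        (Real.log 2 - ∑ l ∈ Finset.range (2 * k), (-1 : ℝ) ^ l / (l + 1)) ∧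
    ((Nat.factorial (2 * k) : ℝ))^2 / (2 ^ (4 * k) * (Nat.factorial k : ℝ)^4) *
        (Real.log 2 - ∑ l ∈ Finset.range (2 * k), (-1 : ℝ) ^ l / (l + 1)) <
      1 / (π ^ 2 * k ^ 2) := by
  have hkR : (1:ℝ) ≤ (k:ℝ) := by exact_mod_cast hk
  set w : ℝ := ((Nat.factorial (2 * k) : ℝ))^2 / (2 ^ (4 * k) * (Nat.factorial k : ℝ)^4) with hw
  set T : ℝ := Real.log 2 - ∑ l ∈ Finset.range (2 * k), (-1 : ℝ) ^ l / (l + 1) with hT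
  have hTpos : 0 < T := by rw [hT, tail_repr]; exact tail_pos k
  have hTub : T ≤ 1 / (4 * k) := by rw [hT, tail_repr]; exact tail_ub k hk
  have hwpos : 0 < w := by rw [hw]; positivity
  have hwlt : w < 1 / (π * k) := ww_lt k hk
  constructor
  · exact mul_pos hwpos hTpos
  · calc w * T < (1 / (π * k)) * T := by exact mul_lt_mul_of_pos_right hwlt hTpos
      _ ≤ (1 / (π * k)) * (1 / (4 * k)) := by
          apply mul_le_mul_of_nonneg_left hTub (by positivity)
      _ < 1 / (π ^ 2 * k ^ 2) := by
          rw [div_mul_div_comm, one_mul]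
          apply one_div_lt_one_div_of_lt (by positivity)
          have h4 : π < 4 := by linarith [Real.pi_lt_d2]
          have hposk2 : (0:ℝ) < π * (k:ℝ)^2 := by positivity
          nlinarith [mul_lt_mul_of_pos_left h4 hposk2]
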